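/- In the linear best-reply environment on an interval I = [μ₀, μ_K] ⊆ [−1, 1], fix an interval analogy partition used by both players. If integrable σ₁, σ₂ : I → ℝ satisfy, for each player i = 1,2, each k = 1,…,K, and almost every μ ∈ α_k, σ_i(μ) = A + μB + μC β_i(α_k), where β_i(α_k) = ∫_{α_k} σ_j(μ) f(μ) dμ / (F(μ_k) − F(μ_{k−1})) (j ≠ i), then for every k: β₁(α_k) = β₂(α_k) = (A + B E[μ|α_k])/(1 − C E[μ|α_k]), and σ₁(μ) = σ₂(μ) = A + μ(B + AC)/(1 − C E[μ|α_k]) for almost every μ ∈ α_k. In particular, given the partition, the ABEE exists, is unique up to null sets, and is symmetric. -/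

import Mathlib

open MeasureTheory Set

/-- Conditional mean of `μ` on the interval `(s, t]` under the density `f`. -/
noncomputable def condMu (f : ℝ → ℝ) (s t : ℝ) : ℝ :=
  (∫ x in Ioc s t, x * f x) / ∫ x in Ioc s t, f x

/-- The `k`-th class of the interval analogy partition with cut points `m`:
`α₁ = [μ₀, μ₁]` and `α_k = (μ_{k-1}, μ_k]` for `k ≥ 2`. -/
noncomputable def clSet (m : ℕ → ℝ) (k : ℕ) : Set ℝ :=
  if k = 1 then Icc (m 0) (m 1) else Ioc (m (k - 1)) (m k)

lemma mono_aux (K : ℕ) (m : ℕ → ℝ) (hmono : ∀ k < K, m k < m (k + 1)) :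
    ∀ i j, i ≤ j → j ≤ K → m i ≤ m j := by
  intro i j hij hjK
  induction j with
  | zero => simp [Nat.le_zero.mp hij]
  | succ n ih =>
    rcases Nat.lt_or_ge i (n + 1) with h | h
    · exact (ih (Nat.lt_succ_iff.mp h) (Nat.le_of_succ_le hjK)).trans
        (hmono n (Nat.lt_of_succ_le hjK)).le
    · have : i = n + 1 := le_antisymm hij h
      simp [this]

/-- **Uniqueness and symmetry of the ABEE in the linear best-reply environment**
(Proposition 7).

The parameter `μ` is distributed on `I = [μ₀, μ_K] ⊆ [-1, 1]` with continuous positive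
density `f`; both players use the interval analogy partition with cut points
`μ₀ < μ₁ < ⋯ < μ_K`; best responses are `A + μ B + μ C m` with `0 < C < 1`.  If the
integrable strategies `σ₁, σ₂` best respond to the consistent analogy-based expectations
`β₁, β₂`, then for every class `k`:
`β₁(α_k) = β₂(α_k) = (A + B E[μ|α_k]) / (1 - C E[μ|α_k])`, and for almost every
`μ ∈ α_k`, `σ₁ μ = σ₂ μ = A + μ (B + A C) / (1 - C E[μ|α_k])`. -/
theorem linear_ABEE_unique_symmetric
    (K : ℕ) (hK : 1 ≤ K) (m : ℕ → ℝ)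
    (hmono : ∀ k < K, m k < m (k + 1))
    (hlo : -1 ≤ m 0) (hhi : m K ≤ 1)
    (f : ℝ → ℝ) (hf : ContinuousOn f (Icc (m 0) (m K)))
    (hfpos : ∀ x ∈ Icc (m 0) (m K), 0 < f x)
    (A B C : ℝ) (hC0 : 0 < C) (hC1 : C < 1)
    (σ₁ σ₂ : ℝ → ℝ)
    (hint₁ : IntegrableOn (fun x => σ₁ x * f x) (Icc (m 0) (m K)))
    (hint₂ : IntegrableOn (fun x => σ₂ x * f x) (Icc (m 0) (m K)))
    (β₁ β₂ : ℕ → ℝ)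
    -- consistency of the analogy-based expectations
    (hβ₁ : ∀ k, 1 ≤ k → k ≤ K → β₁ k =
      (∫ x in Ioc (m (k - 1)) (m k), σ₂ x * f x) / ∫ x in Ioc (m (k - 1)) (m k), f x)
    (hβ₂ : ∀ k, 1 ≤ k → k ≤ K → β₂ k =
      (∫ x in Ioc (m (k - 1)) (m k), σ₁ x * f x) / ∫ x in Ioc (m (k - 1)) (m k), f x)
    -- best responses on (almost) every game of every class
    (hbr₁ : ∀ k, 1 ≤ k → k ≤ K → ∀ᵐ μ : ℝ ∂volume, μ ∈ clSet m k →
      σ₁ μ = A + μ * B + μ * C * β₁ k)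
    (hbr₂ : ∀ k, 1 ≤ k → k ≤ K → ∀ᵐ μ : ℝ ∂volume, μ ∈ clSet m k →
      σ₂ μ = A + μ * B + μ * C * β₂ k) :
    (∀ k, 1 ≤ k → k ≤ K →
      β₁ k = (A + B * condMu f (m (k - 1)) (m k)) / (1 - C * condMu f (m (k - 1)) (m k)) ∧
      β₂ k = (A + B * condMu f (m (k - 1)) (m k)) / (1 - C * condMu f (m (k - 1)) (m k))) ∧
    (∀ k, 1 ≤ k → k ≤ K → ∀ᵐ μ : ℝ ∂volume, μ ∈ clSet m k →
      σ₁ μ = A + μ * (B + A * C) / (1 - C * condMu f (m (k - 1)) (m k)) ∧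
      σ₂ μ = A + μ * (B + A * C) / (1 - C * condMu f (m (k - 1)) (m k))) := by
  have hmle : ∀ i j, i ≤ j → j ≤ K → m i ≤ m j := mono_aux K m hmono
  have key : ∀ k, 1 ≤ k → k ≤ K →
      β₁ k = (A + B * condMu f (m (k - 1)) (m k)) / (1 - C * condMu f (m (k - 1)) (m k)) ∧
      β₂ k = (A + B * condMu f (m (k - 1)) (m k)) / (1 - C * condMu f (m (k - 1)) (m k)) ∧
      0 < 1 - C * condMu f (m (k - 1)) (m k) := by
    intro k hk1 hkK
    have hab : m (k - 1) < m k := by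
      have h := hmono (k - 1) (by omega)
      have : k - 1 + 1 = k := by omega
      rwa [this] at h
    have hsub : Icc (m (k - 1)) (m k) ⊆ Icc (m 0) (m K) :=
      Icc_subset_Icc (hmle 0 (k - 1) (by omega) (by omega)) (hmle k K hkK le_rfl)
    have hfc : ContinuousOn f (Icc (m (k - 1)) (m k)) := hf.mono hsub
    have hfint : IntegrableOn f (Ioc (m (k - 1)) (m k)) :=
      hfc.integrableOn_Icc.mono_set Ioc_subset_Icc_self
    have hxfc : ContinuousOn (fun x => x * f x) (Icc (m (k - 1)) (m k)) :=
      continuous_id.continuousOn.mul hfc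
    have hxfint : IntegrableOn (fun x => x * f x) (Ioc (m (k - 1)) (m k)) :=
      hxfc.integrableOn_Icc.mono_set Ioc_subset_Icc_self
    set I0 := ∫ x in Ioc (m (k - 1)) (m k), f x with hI0
    set I1 := ∫ x in Ioc (m (k - 1)) (m k), x * f x with hI1
    have hI0pos : 0 < I0 := by
      rw [hI0, ← intervalIntegral.integral_of_le hab.le]
      apply intervalIntegral.intervalIntegral_pos_of_pos_on
      · exact hfc.intervalIntegrable_of_Icc hab.le
      · exact fun x hx => hfpos x (hsub ⟨hx.1.le, hx.2.le⟩)
      · exact hab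
    have hI1le : |I1| ≤ I0 := by
      have h1 : |I1| ≤ ∫ x in Ioc (m (k - 1)) (m k), |x * f x| := by
        simpa only [Real.norm_eq_abs] using
          norm_integral_le_integral_norm (μ := volume.restrict (Ioc (m (k - 1)) (m k)))
            (fun x => x * f x)
      refine h1.trans ?_
      apply setIntegral_mono_on hxfint.abs hfint measurableSet_Ioc
      intro x hx
      have hxI : x ∈ Icc (m 0) (m K) := hsub ⟨hx.1.le, hx.2⟩
      have hfx : 0 < f x := hfpos x hxI
      have hx1 : |x| ≤ 1 := abs_le.mpr ⟨hlo.trans hxI.1, hxI.2.trans hhi⟩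
      calc |x * f x| = |x| * f x := by rw [abs_mul, abs_of_pos hfx]
        _ ≤ 1 * f x := by nlinarith
        _ = f x := one_mul _
    have hE : condMu f (m (k - 1)) (m k) = I1 / I0 := rfl
    set e := condMu f (m (k - 1)) (m k) with he
    have heabs : |e| ≤ 1 := by
      rw [hE, abs_div, abs_of_pos hI0pos]
      exact div_le_one_of_le₀ hI1le hI0pos.le
    have hCe : |C * e| < 1 := by
      rw [abs_mul, abs_of_pos hC0]
      calc C * |e| ≤ C * 1 := by nlinarith
        _ < 1 := by linarith
    have hden : 0 < 1 - C * e := by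
      have := abs_lt.mp hCe
      linarith [this.2]
    have hden2 : 0 < 1 + C * e := by
      have := abs_lt.mp hCe
      linarith [this.1]
    have hsubcl : Ioc (m (k - 1)) (m k) ⊆ clSet m k := by
      unfold clSet
      split
      · rename_i h
        subst h
        simpa using Ioc_subset_Icc_self
      · exact subset_rfl
    have hcomp : ∀ (β : ℝ) (σ : ℝ → ℝ),
        (∀ᵐ μ : ℝ ∂volume, μ ∈ clSet m k → σ μ = A + μ * B + μ * C * β) →
        (∫ x in Ioc (m (k - 1)) (m k), σ x * f x) = A * I0 + (B + C * β) * I1 := by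
      intro β σ hae
      have h1 : ∫ x in Ioc (m (k - 1)) (m k), σ x * f x
          = ∫ x in Ioc (m (k - 1)) (m k), (A * f x + (B + C * β) * (x * f x)) := by
        apply setIntegral_congr_ae measurableSet_Ioc
        filter_upwards [hae] with x hx hxmem
        rw [hx (hsubcl hxmem)]; ring
      rw [h1, integral_add (hfint.const_mul A) (hxfint.const_mul (B + C * β)),
        integral_const_mul, integral_const_mul]
    have h1 : β₁ k = A + (B + C * β₂ k) * e := by
      rw [hβ₁ k hk1 hkK, hcomp (β₂ k) σ₂ (hbr₂ k hk1 hkK), hE, ← hI0]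
      field_simp
    have h2 : β₂ k = A + (B + C * β₁ k) * e := by
      rw [hβ₂ k hk1 hkK, hcomp (β₁ k) σ₁ (hbr₁ k hk1 hkK), hE, ← hI0]
      field_simp
    have heqβ : β₁ k = β₂ k := by
      have hd : (1 + C * e) * (β₁ k - β₂ k) = 0 := by linear_combination h1 - h2
      rcases mul_eq_zero.mp hd with h | h
      · linarith
      · linarith
    have hval : β₁ k = (A + B * e) / (1 - C * e) := by
      rw [eq_div_iff (ne_of_gt hden)]
      rw [← heqβ] at h2
      linear_combination h2
    exact ⟨hval, heqβ ▸ hval, hden⟩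
  refine ⟨fun k hk1 hkK => ⟨(key k hk1 hkK).1, (key k hk1 hkK).2.1⟩, ?_⟩
  intro k hk1 hkK
  obtain ⟨hv1, hv2, hden⟩ := key k hk1 hkK
  filter_upwards [hbr₁ k hk1 hkK, hbr₂ k hk1 hkK] with μ ha1 ha2 hμ
  constructor
  · rw [ha1 hμ, hv1]
    field_simp
    ring
  · rw [ha2 hμ, hv2]
    field_simp
    ring
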